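/- arXiv:1511.00877 — 2 statements merged into one kernel-verified Lean document; each statement's English description precedes it below -/
import Mathlib

section
/- Let A be an m×n matrix over ℝ≥0 and let b ∈ ℝ≥0^m be such that the system A⊗x = b has at least one solution x ∈ ℝ≥0^n. Then the solution is unique (i.e. there is exactly one x ∈ ℝ≥0^n with A⊗x = b) if and only if there is no index i with γ*_i(A,b) ≠ 0 such that b ∈ span(A^{(i)}). -/
open scoped NNReal ENNReal

noncomputable section

namespace MaxAlg

/-- Max-algebraic matrix–vector product over ℝ≥0: (A⊗x)_i = max_j a_{ij}·x_j. -/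
def mulVec {m n : ℕ} (A : Matrix (Fin m) (Fin n) ℝ≥0) (x : Fin n → ℝ≥0) :
    Fin m → ℝ≥0 :=
  fun i => Finset.univ.sup fun j => A i j * x j

/-- Support of a vector. -/
def supp {m : ℕ} (x : Fin m → ℝ≥0) : Set (Fin m) := {i | x i ≠ 0}

/-- Eigencone V(A,λ) = {x : A⊗x = λ·x}. -/
def eigencone {n : ℕ} (A : Matrix (Fin n) (Fin n) ℝ≥0) (lam : ℝ≥0) :
    Set (Fin n → ℝ≥0) :=
  {x | mulVec A x = fun i => lam * x i}

/-- A cycle of length `k ≥ 1` is encoded as `σ : ℕ → Fin n` with `σ k = σ 0`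
(standing for a function on ℤ/kℤ). -/
def IsCycle {n : ℕ} (k : ℕ) (σ : ℕ → Fin n) : Prop := 1 ≤ k ∧ σ k = σ 0

/-- The cycle lies in a set S: all its values belong to S. -/
def LiesIn {n : ℕ} (k : ℕ) (σ : ℕ → Fin n) (S : Set (Fin n)) : Prop :=
  ∀ t < k, σ t ∈ S

/-- Weight of a cycle in A: ∏_t a_{σ(t),σ(t+1)}. -/
def cycleWeight {n : ℕ} (A : Matrix (Fin n) (Fin n) ℝ≥0) (k : ℕ) (σ : ℕ → Fin n) : ℝ≥0 :=
  ∏ t ∈ Finset.range k, A (σ t) (σ (t + 1))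

/-- γ*_j(A,b): the greatest α ∈ [0,∞] with α·a_{ij} ≤ b_i for all i
(conventions 0·∞ = ∞·0 = 0 are built into ℝ≥0∞ multiplication). -/
def gammaStar {m n : ℕ} (A : Matrix (Fin m) (Fin n) ℝ≥0) (b : Fin m → ℝ≥0) (j : Fin n) :
    ℝ≥0∞ :=
  sSup {α : ℝ≥0∞ | ∀ i, α * (A i j : ℝ≥0∞) ≤ (b i : ℝ≥0∞)}

/-- M_j(A,b) = {i : a_{ij}·γ*_j(A,b) = b_i ≠ 0}. -/
def Mset {m n : ℕ} (A : Matrix (Fin m) (Fin n) ℝ≥0) (b : Fin m → ℝ≥0) (j : Fin n) :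
    Set (Fin m) :=
  {i | (A i j : ℝ≥0∞) * gammaStar A b j = (b i : ℝ≥0∞) ∧ b i ≠ 0}

/-- Max-algebraic column span of A. -/
def span {m n : ℕ} (A : Matrix (Fin m) (Fin n) ℝ≥0) : Set (Fin m → ℝ≥0) :=
  {y | ∃ c : Fin n → ℝ≥0, ∀ r, y r = Finset.univ.sup fun j => A r j * c j}

/-- Max-algebraic column span of A with its i-th column removed. -/
def spanMinus {m n : ℕ} (A : Matrix (Fin m) (Fin n) ℝ≥0) (i : Fin n) :
    Set (Fin m → ℝ≥0) :=
  {y | ∃ c : Fin n → ℝ≥0, ∀ r, y r = (Finset.univ.erase i).sup fun j => A r j * c j}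

/-- N^λ(A) = {i : ∃ x ∈ V(A,λ), x_i > 0}. -/
def Nlam {n : ℕ} (A : Matrix (Fin n) (Fin n) ℝ≥0) (lam : ℝ≥0) : Set (Fin n) :=
  {i | ∃ x ∈ eigencone A lam, 0 < x i}

/-- (i,j) is an edge of crit(A,λ). -/
def CritEdge {n : ℕ} (A : Matrix (Fin n) (Fin n) ℝ≥0) (lam : ℝ≥0) (i j : Fin n) : Prop :=
  ∃ k σ, IsCycle k σ ∧ LiesIn k σ (Nlam A lam) ∧ cycleWeight A k σ = lam ^ k ∧
    ∃ t < k, σ t = i ∧ σ (t + 1) = j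

/-- i is a critical node: some cycle lying in N^λ(A) with weight λ^k passes through i. -/
def CritNode {n : ℕ} (A : Matrix (Fin n) (Fin n) ℝ≥0) (lam : ℝ≥0) (i : Fin n) : Prop :=
  ∃ k σ, IsCycle k σ ∧ LiesIn k σ (Nlam A lam) ∧ cycleWeight A k σ = lam ^ k ∧
    ∃ t < k, σ t = i

/-- (i,j) is an edge of crit(A,x,λ). -/
def CritEdgeOn {n : ℕ} (A : Matrix (Fin n) (Fin n) ℝ≥0) (lam : ℝ≥0) (x : Fin n → ℝ≥0)
    (i j : Fin n) : Prop :=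
  ∃ k σ, IsCycle k σ ∧ LiesIn k σ (supp x) ∧ cycleWeight A k σ = lam ^ k ∧
    ∃ t < k, σ t = i ∧ σ (t + 1) = j

/-- x is a simple image eigenvector of A associated with λ. -/
def SimpleImageEig {n : ℕ} (A : Matrix (Fin n) (Fin n) ℝ≥0) (lam : ℝ≥0)
    (x : Fin n → ℝ≥0) : Prop :=
  x ∈ eigencone A lam ∧
    ∀ y : Fin n → ℝ≥0, mulVec A y = (fun i => lam * x i) → y = x

/-- The box (interval) determined by component intervals X_j. -/
def box {n : ℕ} (X : Fin n → Set ℝ≥0) : Set (Fin n → ℝ≥0) := {x | ∀ j, x j ∈ X j}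

/-- Each component set is a nonempty order-convex interval of ℝ≥0. -/
def IsInterval {n : ℕ} (X : Fin n → Set ℝ≥0) : Prop :=
  ∀ j, (X j).Nonempty ∧ (X j).OrdConnected

/-- A has X-simple image eigencone associated with λ. -/
def XSimple {n : ℕ} (A : Matrix (Fin n) (Fin n) ℝ≥0) (lam : ℝ≥0)
    (X : Fin n → Set ℝ≥0) : Prop :=
  ∀ x ∈ eigencone A lam ∩ box X,
    ∀ y ∈ box X, mulVec A y = (fun i => lam * x i) → y = x

lemma gamma_mem {m n : ℕ} (A : Matrix (Fin m) (Fin n) ℝ≥0) (b : Fin m → ℝ≥0) (j : Fin n)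
    (i : Fin m) : gammaStar A b j * (A i j : ℝ≥0∞) ≤ (b i : ℝ≥0∞) := by
  by_cases h : A i j = 0
  · simp [h]
  · have hne : (A i j : ℝ≥0∞) ≠ 0 := by exact_mod_cast h
    rw [← ENNReal.le_div_iff_mul_le (Or.inl hne) (Or.inl ENNReal.coe_ne_top)]
    apply sSup_le
    intro α hα
    rw [ENNReal.le_div_iff_mul_le (Or.inl hne) (Or.inl ENNReal.coe_ne_top)]
    exact hα i

lemma sol_le_gamma {m n : ℕ} (A : Matrix (Fin m) (Fin n) ℝ≥0) (b : Fin m → ℝ≥0)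
    {x : Fin n → ℝ≥0} (hx : mulVec A x = b) (j : Fin n) :
    (x j : ℝ≥0∞) ≤ gammaStar A b j := by
  apply le_sSup
  intro i
  have : A i j * x j ≤ b i := by
    rw [← hx]
    exact Finset.le_sup (f := fun j => A i j * x j) (Finset.mem_univ j)
  calc (x j : ℝ≥0∞) * (A i j : ℝ≥0∞) = ((A i j * x j : ℝ≥0) : ℝ≥0∞) := by
        push_cast; ring
    _ ≤ (b i : ℝ≥0∞) := by exact_mod_cast this

lemma gamma_top_col_zero {m n : ℕ} (A : Matrix (Fin m) (Fin n) ℝ≥0) (b : Fin m → ℝ≥0)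
    {j : Fin n} (h : gammaStar A b j = ⊤) (i : Fin m) : A i j = 0 := by
  by_contra hne
  have := gamma_mem A b j i
  rw [h, ENNReal.top_mul (by exact_mod_cast hne)] at this
  exact (ENNReal.coe_ne_top (r := b i)) (top_le_iff.mp this)

/-- The principal solution. -/
def xbar {m n : ℕ} (A : Matrix (Fin m) (Fin n) ℝ≥0) (b : Fin m → ℝ≥0) :
    Fin n → ℝ≥0 := fun j => (gammaStar A b j).toNNReal

lemma term_le_xbar {m n : ℕ} (A : Matrix (Fin m) (Fin n) ℝ≥0) (b : Fin m → ℝ≥0)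
    {x : Fin n → ℝ≥0} (hx : mulVec A x = b) (r : Fin m) (j : Fin n) :
    A r j * x j ≤ A r j * xbar A b j := by
  by_cases htop : gammaStar A b j = ⊤
  · simp [gamma_top_col_zero A b htop r]
  · have : x j ≤ xbar A b j := by
      have h1 := sol_le_gamma A b hx j
      rw [← ENNReal.coe_toNNReal htop] at h1
      exact_mod_cast h1
    exact mul_le_mul_right this _

lemma xbar_term_le {m n : ℕ} (A : Matrix (Fin m) (Fin n) ℝ≥0) (b : Fin m → ℝ≥0)
    (r : Fin m) (j : Fin n) : A r j * xbar A b j ≤ b r := by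
  by_cases htop : gammaStar A b j = ⊤
  · simp [gamma_top_col_zero A b htop r]
  · have := gamma_mem A b j r
    rw [← ENNReal.coe_toNNReal htop] at this
    have h2 : ((xbar A b j * A r j : ℝ≥0) : ℝ≥0∞) ≤ (b r : ℝ≥0∞) := by
      push_cast; exact this
    have := ENNReal.coe_le_coe.mp h2
    rwa [mul_comm] at this

lemma xbar_sol {m n : ℕ} (A : Matrix (Fin m) (Fin n) ℝ≥0) (b : Fin m → ℝ≥0)
    (hex : ∃ x : Fin n → ℝ≥0, mulVec A x = b) : mulVec A (xbar A b) = b := by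
  obtain ⟨x, hx⟩ := hex
  funext r
  apply le_antisymm
  · exact Finset.sup_le fun j _ => xbar_term_le A b r j
  · calc b r = mulVec A x r := (congrFun hx r).symm
      _ ≤ _ := Finset.sup_le fun j _ =>
          le_trans (term_le_xbar A b hx r j)
            (Finset.le_sup (f := fun j => A r j * xbar A b j) (Finset.mem_univ j))

lemma exists_of_two {m n : ℕ} (A : Matrix (Fin m) (Fin n) ℝ≥0) (b : Fin m → ℝ≥0)
    {x y : Fin n → ℝ≥0} (hx : mulVec A x = b) (hy : mulVec A y = b) {i : Fin n}
    (hlt : x i < y i) : gammaStar A b i ≠ 0 ∧ b ∈ spanMinus A i := by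
  have hypos : 0 < y i := lt_of_le_of_lt zero_le hlt
  constructor
  · intro h0
    have := sol_le_gamma A b hy i
    rw [h0, le_zero_iff] at this
    exact absurd (by exact_mod_cast this) (ne_of_gt hypos)
  · refine ⟨xbar A b, fun r => ?_⟩
    apply le_antisymm
    · have hne : (Finset.univ : Finset (Fin n)).Nonempty := ⟨i, Finset.mem_univ i⟩
      obtain ⟨j0, _, hj0⟩ := Finset.exists_mem_eq_sup Finset.univ hne
        (fun j => A r j * x j)
      have hbr : b r = A r j0 * x j0 := by rw [← hx]; exact hj0
      rcases eq_or_ne j0 i with rfl | hji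
      · by_cases hbz : b r = 0
        · rw [hbz]; exact zero_le
        · have hA : A r j0 ≠ 0 := fun h => hbz (by rw [hbr, h, zero_mul])
          have hterm : A r j0 * y j0 ≤ b r := by
            rw [← hy]
            exact Finset.le_sup (f := fun j => A r j * y j) (Finset.mem_univ j0)
          rw [hbr] at hterm
          have := le_of_mul_le_mul_left hterm ((pos_iff_ne_zero.mpr hA))
          exact absurd this (not_le_of_gt hlt)
      · calc b r = A r j0 * x j0 := hbr
          _ ≤ A r j0 * xbar A b j0 := term_le_xbar A b hx r j0
          _ ≤ _ := Finset.le_sup (f := fun j => A r j * xbar A b j)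
              (Finset.mem_erase.mpr ⟨hji, Finset.mem_univ j0⟩)
    · exact Finset.sup_le fun j _ => xbar_term_le A b r j

/-- criterion for uniqueness of the solution of A⊗x = b. -/
theorem stmt8 {m n : ℕ} (A : Matrix (Fin m) (Fin n) ℝ≥0) (b : Fin m → ℝ≥0)
    (hex : ∃ x : Fin n → ℝ≥0, mulVec A x = b) :
    (∃! x : Fin n → ℝ≥0, mulVec A x = b) ↔
      ¬ ∃ i : Fin n, gammaStar A b i ≠ 0 ∧ b ∈ spanMinus A i := by
  constructor
  · rintro ⟨x0, _, huniq⟩ ⟨i, hγ, c, hc⟩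
    have hxbar := xbar_sol A b hex
    -- any update of xbar at i by a feasible value is a solution
    have hupd : ∀ v : ℝ≥0, (∀ r, A r i * v ≤ b r) →
        mulVec A (Function.update (xbar A b) i v) = b := by
      intro v hv
      funext r
      apply le_antisymm
      · apply Finset.sup_le; intro j _
        rcases eq_or_ne j i with rfl | hj
        · rw [Function.update_self]; exact hv r
        · rw [Function.update_of_ne hj]; exact xbar_term_le A b r j
      · rw [hc r]
        apply Finset.sup_le; intro j hj
        have hjne : j ≠ i := (Finset.mem_erase.mp hj).1
        have hcj : ∀ r', A r' j * c j ≤ A r' j * xbar A b j := by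
          intro r'
          have hmem : (c j : ℝ≥0∞) ≤ gammaStar A b j := by
            apply le_sSup
            intro r''
            have h1 : A r'' j * c j ≤ b r'' := by
              rw [hc r'']
              exact Finset.le_sup (f := fun j => A r'' j * c j)
                (Finset.mem_erase.mpr ⟨hjne, Finset.mem_univ j⟩)
            calc (c j : ℝ≥0∞) * (A r'' j : ℝ≥0∞)
                = ((A r'' j * c j : ℝ≥0) : ℝ≥0∞) := by push_cast; ring
              _ ≤ (b r'' : ℝ≥0∞) := by exact_mod_cast h1
          by_cases htop : gammaStar A b j = ⊤
          · simp [gamma_top_col_zero A b htop r']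
          · have : c j ≤ xbar A b j := by
              rw [← ENNReal.coe_toNNReal htop] at hmem
              exact_mod_cast hmem
            exact mul_le_mul_right this _
        calc A r j * c j ≤ A r j * xbar A b j := hcj r
          _ = A r j * Function.update (xbar A b) i v j := by
              rw [Function.update_of_ne hjne]
          _ ≤ _ := Finset.le_sup
              (f := fun j => A r j * Function.update (xbar A b) i v j)
              (Finset.mem_univ j)
    by_cases h0 : xbar A b i = 0
    · -- then gammaStar A b i = ⊤, so column i is zero
      have htop : gammaStar A b i = ⊤ := by
        rcases ENNReal.toNNReal_eq_zero_iff _ |>.mp h0 with h | h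
        · exact absurd h hγ
        · exact h
      have hcol : ∀ r, A r i = 0 := gamma_top_col_zero A b htop
      have hs1 : mulVec A (Function.update (xbar A b) i 1) = b :=
        hupd 1 fun r => by simp [hcol r]
      have e1 := huniq _ hs1
      have e2 := huniq _ hxbar
      have := congrFun (e1.trans e2.symm) i
      rw [Function.update_self, h0] at this
      exact one_ne_zero this
    · have hs0 : mulVec A (Function.update (xbar A b) i 0) = b :=
        hupd 0 fun r => by simp
      have e1 := huniq _ hs0
      have e2 := huniq _ hxbar
      have := congrFun (e1.trans e2.symm) i
      rw [Function.update_self] at this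
      exact h0 this.symm
  · intro hno
    obtain ⟨x0, hx0⟩ := hex
    refine ⟨x0, hx0, fun y hy => ?_⟩
    by_contra hne
    obtain ⟨i, hi⟩ := Function.ne_iff.mp hne
    rcases lt_or_gt_of_ne hi with h | h
    · exact hno ⟨i, exists_of_two A b hy hx0 h⟩
    · exact hno ⟨i, exists_of_two A b hx0 hy h⟩

end MaxAlg

end
end

section
/- Let A be an n×n matrix over ℝ≥0 and λ > 0. Then V(A,λ) contains a nonzero simple image eigenvector associated with λ if and only if there exists a nonempty subset N' ⊆ {1,…,n} with the following four properties: (i) there exists x ∈ ℝ≥0^n with A⊗x = λ·x and supp(x) = N'; (ii) for every i ∉ N' there exists l ∉ N' with a_{li} ≠ 0; (iii) for every i ∈ N' there is a cycle lying in N' passing through i whose weight equals λ raised to its length; (iv) for every i ∈ N' there is exactly one index j such that the pair (i,j) occurs as a pair of consecutive values on some cycle lying in N' whose weight equals λ raised to its length (i.e., every node of the critical graph crit(A,x,λ) has a unique outgoing critical edge, so that all strongly connected components of crit(A,x,λ) are cycles). -/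
open scoped NNReal ENNReal

noncomputable section

namespace MaxAlg

section Aux

variable {n : ℕ} {A : Matrix (Fin n) (Fin n) ℝ≥0} {lam : ℝ≥0}

lemma term_le_mulVec (x : Fin n → ℝ≥0) (i j : Fin n) : A i j * x j ≤ mulVec A x i :=
  Finset.le_sup (f := fun j => A i j * x j) (Finset.mem_univ j)

lemma exists_attain (x : Fin n → ℝ≥0) (i : Fin n) :
    ∃ j, mulVec A x i = A i j * x j := by
  obtain ⟨j, -, hj⟩ := Finset.exists_mem_eq_sup Finset.univ ⟨i, Finset.mem_univ i⟩
    (fun j => A i j * x j)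
  exact ⟨j, hj⟩

lemma prod_eq_of_le {k : ℕ} {a b : ℕ → ℝ≥0}
    (hle : ∀ t < k, a t ≤ b t) (hb : ∀ t < k, b t ≠ 0)
    (hprod : ∏ t ∈ Finset.range k, a t = ∏ t ∈ Finset.range k, b t) :
    ∀ t < k, a t = b t := by
  intro s hs
  by_contra hne
  have hlt : a s < b s := lt_of_le_of_ne (hle s hs) hne
  have hsmem : s ∈ Finset.range k := Finset.mem_range.2 hs
  have h1 : ∏ t ∈ Finset.range k, a t ≤ a s * ∏ t ∈ (Finset.range k).erase s, b t := by
    rw [← Finset.mul_prod_erase _ a hsmem]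
    refine mul_le_mul_right (Finset.prod_le_prod' ?_) _
    intro t ht
    exact hle t (Finset.mem_range.1 (Finset.mem_of_mem_erase ht))
  have h2 : a s * ∏ t ∈ (Finset.range k).erase s, b t
      < b s * ∏ t ∈ (Finset.range k).erase s, b t := by
    refine mul_lt_mul_of_pos_right hlt ?_
    refine pos_iff_ne_zero.2 (Finset.prod_ne_zero_iff.2 ?_)
    intro t ht
    exact hb t (Finset.mem_range.1 (Finset.mem_of_mem_erase ht))
  rw [Finset.mul_prod_erase _ b hsmem] at h2
  exact absurd hprod (ne_of_lt (lt_of_le_of_lt h1 h2))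

lemma prod_shift {k : ℕ} {g : ℕ → ℝ≥0} (hcyc : g k = g 0) (h0 : g 0 ≠ 0) :
    ∏ t ∈ Finset.range k, g (t + 1) = ∏ t ∈ Finset.range k, g t := by
  have h1 := Finset.prod_range_succ' g k
  have h2 := Finset.prod_range_succ g k
  rw [h1, hcyc] at h2
  exact mul_right_cancel₀ h0 h2

lemma cycle_tight {x : Fin n → ℝ≥0} (hE : mulVec A x = fun i => lam * x i)
    (hlam : 0 < lam) {k : ℕ} {σ : ℕ → Fin n} (hc : IsCycle k σ)
    (hin : ∀ t < k, x (σ t) ≠ 0) (hw : cycleWeight A k σ = lam ^ k) :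
    ∀ t < k, A (σ t) (σ (t + 1)) * x (σ (t + 1)) = lam * x (σ t) := by
  have hle : ∀ t < k, A (σ t) (σ (t + 1)) * x (σ (t + 1)) ≤ lam * x (σ t) := by
    intro t _
    calc A (σ t) (σ (t + 1)) * x (σ (t + 1)) ≤ mulVec A x (σ t) :=
          term_le_mulVec x _ _
      _ = lam * x (σ t) := by rw [hE]
  have hb : ∀ t < k, lam * x (σ t) ≠ 0 := fun t ht =>
    mul_ne_zero hlam.ne' (hin t ht)
  have hshift : ∏ t ∈ Finset.range k, x (σ (t + 1)) = ∏ t ∈ Finset.range k, x (σ t) :=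
    prod_shift (g := fun t => x (σ t)) (by simp [hc.2]) (hin 0 hc.1)
  have hprod : ∏ t ∈ Finset.range k, (A (σ t) (σ (t + 1)) * x (σ (t + 1)))
      = ∏ t ∈ Finset.range k, (lam * x (σ t)) := by
    rw [Finset.prod_mul_distrib, Finset.prod_mul_distrib]
    have h : ∏ t ∈ Finset.range k, A (σ t) (σ (t+1)) = cycleWeight A k σ := rfl
    rw [h, hw, hshift, Finset.prod_const, Finset.card_range]
  exact prod_eq_of_le hle hb hprod

lemma tight_cycle_weight {x : Fin n → ℝ≥0} {k : ℕ} {σ : ℕ → Fin n}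
    (hc : IsCycle k σ) (hin : ∀ t < k, x (σ t) ≠ 0)
    (ht : ∀ t < k, A (σ t) (σ (t + 1)) * x (σ (t + 1)) = lam * x (σ t)) :
    cycleWeight A k σ = lam ^ k := by
  have hshift : ∏ t ∈ Finset.range k, x (σ (t + 1)) = ∏ t ∈ Finset.range k, x (σ t) :=
    prod_shift (g := fun t => x (σ t)) (by simp [hc.2]) (hin 0 hc.1)
  have hprod : ∏ t ∈ Finset.range k, (A (σ t) (σ (t + 1)) * x (σ (t + 1)))
      = ∏ t ∈ Finset.range k, (lam * x (σ t)) := Finset.prod_congr rfl (fun t htm =>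
        ht t (Finset.mem_range.1 htm))
  rw [Finset.prod_mul_distrib, Finset.prod_mul_distrib, Finset.prod_const,
    Finset.card_range, hshift] at hprod
  have hne : ∏ t ∈ Finset.range k, x (σ t) ≠ 0 :=
    Finset.prod_ne_zero_iff.2 (fun t htm => hin t (Finset.mem_range.1 htm))
  exact mul_right_cancel₀ hne hprod


/-- condition (ii) in forward direction -/
lemma fwd_ii {x : Fin n → ℝ≥0} (hE : mulVec A x = fun i => lam * x i) (hlam : 0 < lam)
    (huniq : ∀ y : Fin n → ℝ≥0, mulVec A y = (fun i => lam * x i) → y = x)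
    {i : Fin n} (hxi : x i = 0) (hA : ∀ l, x l = 0 → A l i = 0) : False := by
  classical
  set g : Fin n → ℝ≥0 := fun l => if A l i = 0 then 1 else lam * x l / A l i with hg
  set ε : ℝ≥0 := Finset.univ.inf' ⟨i, Finset.mem_univ i⟩ g with hε
  have hgpos : ∀ l, 0 < g l := by
    intro l
    by_cases h : A l i = 0
    · simp [hg, h]
    · have hxl : x l ≠ 0 := fun h0 => h (hA l h0)
      simp only [hg, h, if_false]
      exact div_pos (mul_pos hlam (pos_iff_ne_zero.2 hxl)) (pos_iff_ne_zero.2 h)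
  have hεpos : 0 < ε := by
    rw [hε]; refine (Finset.lt_inf'_iff _).2 ?_
    exact fun l _ => hgpos l
  set y : Fin n → ℝ≥0 := Function.update x i ε with hy
  have hyj : ∀ j, j ≠ i → y j = x j := fun j hj => Function.update_of_ne hj _ _
  have hyi : y i = ε := Function.update_self _ _ _
  have hterm : ∀ l j, A l j * y j ≤ lam * x l := by
    intro l j
    by_cases hj : j = i
    · rw [hj, hyi]
      by_cases h : A l i = 0
      · simp [h]
      · have h1 : ε ≤ g l := Finset.inf'_le _ (Finset.mem_univ l)
        have h2 : A l i * g l ≤ lam * x l := by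
          simp only [hg, h, if_false]
          rw [mul_comm, div_mul_cancel₀ _ h]
        calc A l i * ε ≤ A l i * g l := mul_le_mul_right h1 _
          _ ≤ lam * x l := h2
    · rw [hyj j hj]
      calc A l j * x j ≤ mulVec A x l := term_le_mulVec x l j
        _ = lam * x l := by rw [hE]
  have hEy : mulVec A y = fun l => lam * x l := by
    funext l
    refine le_antisymm (Finset.sup_le fun j _ => hterm l j) ?_
    by_cases hxl : x l = 0
    · simp [hxl]
    · obtain ⟨j, hj⟩ := exists_attain x l
      rw [hE] at hj
      have hjne : j ≠ i := by
        intro h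
        rw [h, hxi, mul_zero] at hj
        exact hxl (by simpa [hlam.ne'] using mul_eq_zero.1 hj)
      have heq : A l j * y j = lam * x l := by rw [hyj j hjne, ← hj]
      calc lam * x l = A l j * y j := heq.symm
        _ ≤ mulVec A y l := term_le_mulVec y l j
  have hux := huniq y hEy
  rw [hux] at hyi
  exact hεpos.ne' (hyi.symm.trans hxi)


/-- unique tight successors exist (forward direction) -/
lemma fwd_single {x : Fin n → ℝ≥0} (hE : mulVec A x = fun i => lam * x i) (hlam : 0 < lam)
    (huniq : ∀ y : Fin n → ℝ≥0, mulVec A y = (fun i => lam * x i) → y = x)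
    {j : Fin n} (hxj : x j ≠ 0) :
    ∃ l, x l ≠ 0 ∧ (A l j * x j = lam * x l) ∧
      ∀ j', A l j' * x j' = lam * x l → j' = j := by
  classical
  by_contra hcon
  push_neg at hcon
  -- every l with x l ≠ 0 has a tight successor different from j
  have halt : ∀ l, x l ≠ 0 → ∃ j', j' ≠ j ∧ A l j' * x j' = lam * x l := by
    intro l hl
    obtain ⟨j0, hj0⟩ := exists_attain x l
    rw [hE] at hj0
    by_cases htj : A l j * x j = lam * x l
    · obtain ⟨j', hj', hne⟩ := hcon l hl htj
      exact ⟨j', hne, hj'⟩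
    · refine ⟨j0, ?_, hj0.symm⟩
      intro h
      exact htj (h ▸ hj0.symm)
  set y : Fin n → ℝ≥0 := Function.update x j 0 with hy
  have hyk : ∀ j', j' ≠ j → y j' = x j' := fun j' h => Function.update_of_ne h _ _
  have hyj : y j = 0 := Function.update_self _ _ _
  have hyle : ∀ j', y j' ≤ x j' := by
    intro j'
    by_cases h : j' = j
    · rw [h, hyj]; exact zero_le
    · rw [hyk j' h]
  have hEy : mulVec A y = fun l => lam * x l := by
    funext l
    refine le_antisymm (Finset.sup_le fun j' _ => ?_) ?_
    · calc A l j' * y j' ≤ A l j' * x j' := mul_le_mul_right (hyle j') _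
        _ ≤ mulVec A x l := term_le_mulVec x l j'
        _ = lam * x l := by rw [hE]
    · by_cases hxl : x l = 0
      · simp [hxl]
      · obtain ⟨j', hne, htight⟩ := halt l hxl
        calc lam * x l = A l j' * y j' := by rw [hyk j' hne, htight]
          _ ≤ mulVec A y l := term_le_mulVec y l j'
  have hux := huniq y hEy
  rw [hux] at hyj
  exact hxj hyj

/-- The unique-successor map, as a permutation of the support. -/
lemma fwd_perm {x : Fin n → ℝ≥0} (hE : mulVec A x = fun i => lam * x i) (hlam : 0 < lam)
    (huniq : ∀ y : Fin n → ℝ≥0, mulVec A y = (fun i => lam * x i) → y = x) :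
    ∃ p : Equiv.Perm {i : Fin n // x i ≠ 0},
      ∀ l : {i : Fin n // x i ≠ 0},
        (A l.val (p l).val * x (p l).val = lam * x l.val) ∧
        ∀ j', A l.val j' * x j' = lam * x l.val → j' = (p l).val := by
  classical
  set S := {i : Fin n // x i ≠ 0}
  have hch : ∀ j : S, ∃ l : S, (A l.val j.val * x j.val = lam * x l.val) ∧
      ∀ j', A l.val j' * x j' = lam * x l.val → j' = j.val := by
    intro j
    obtain ⟨l, hl, h1, h2⟩ := fwd_single hE hlam huniq j.prop
    exact ⟨⟨l, hl⟩, h1, h2⟩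
  choose g hg1 hg2 using hch
  have ginj : Function.Injective g := by
    intro a b hab
    have h1 : A (g b).val a.val * x a.val = lam * x (g b).val := by
      rw [← hab]; exact hg1 a
    exact Subtype.ext (hg2 b a.val h1)
  have gbij : Function.Bijective g := Finite.injective_iff_bijective.1 ginj
  set e := Equiv.ofBijective g gbij with he
  refine ⟨e.symm, fun l => ?_⟩
  have hgel : g (e.symm l) = l := e.apply_symm_apply l
  constructor
  · have := hg1 (e.symm l)
    rwa [hgel] at this
  · intro j' hj'
    exact hg2 (e.symm l) j' (by rw [hgel]; exact hj')


section Backward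

variable (A lam)

/-- tight edge relation inside the support -/
def tightR (x : Fin n → ℝ≥0) (i j : Fin n) : Prop :=
  x i ≠ 0 ∧ x j ≠ 0 ∧ A i j * x j = lam * x i

/-- critical edge relation phrased w.r.t. supp x -/
def Crit (x : Fin n → ℝ≥0) (i j : Fin n) : Prop :=
  ∃ k σ, IsCycle k σ ∧ (∀ t < k, x (σ t) ≠ 0) ∧ cycleWeight A k σ = lam ^ k ∧
    ∃ t < k, σ t = i ∧ σ (t + 1) = j

variable {A lam}

lemma tightR_of_crit {x : Fin n → ℝ≥0} (hE : mulVec A x = fun i => lam * x i)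
    (hlam : 0 < lam) {i j : Fin n} (h : Crit A lam x i j) : tightR A lam x i j := by
  obtain ⟨k, σ, hc, hin, hw, t, htk, hti, htj⟩ := h
  have hxj : x (σ (t + 1)) ≠ 0 := by
    rcases lt_or_eq_of_le (Nat.succ_le_of_lt htk) with h' | h'
    · exact hin _ h'
    · rw [show t + 1 = k from h', hc.2]; exact hin 0 hc.1
  have hter := cycle_tight hE hlam hc hin hw t htk
  rw [hti, htj] at hter
  exact ⟨hti ▸ hin t htk, htj ▸ hxj, hter⟩

/-- turn a reflexive-transitive tight path into an explicit path -/
lemma path_of_rtg {x : Fin n → ℝ≥0} {u v : Fin n}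
    (h : Relation.ReflTransGen (tightR A lam x) u v) :
    ∃ (k : ℕ) (σ : ℕ → Fin n), σ 0 = u ∧ σ k = v ∧
      ∀ t < k, tightR A lam x (σ t) (σ (t + 1)) := by
  induction h with
  | refl => exact ⟨0, fun _ => u, rfl, rfl, fun t ht => absurd ht (by omega)⟩
  | @tail b c hub hbc ih =>
    obtain ⟨k, σ, h0, hk, hedge⟩ := ih
    refine ⟨k + 1, fun t => if t ≤ k then σ t else c, by simp [h0], by simp, ?_⟩
    intro t ht
    by_cases h1 : t + 1 ≤ k
    · simp only [le_of_lt (Nat.lt_of_succ_le h1), if_true, h1, if_true]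
      exact hedge t (Nat.lt_of_succ_le h1)
    · have ht' : t = k := by omega
      subst ht'
      simp only [le_refl, if_true, h1, if_false]
      rw [hk]
      exact hbc

/-- a tight edge (l,j) together with a tight path from j back to l gives a
critical edge (l,j) -/
lemma crit_of_tight_loop {x : Fin n → ℝ≥0} {l j : Fin n}
    (hedge : tightR A lam x l j)
    (hpath : Relation.ReflTransGen (tightR A lam x) j l) :
    Crit A lam x l j := by
  obtain ⟨k, σ, h0, hk, hedges⟩ := path_of_rtg hpath
  classical
  set τ : ℕ → Fin n := fun t => if t = 0 then l else σ (t - 1) with hτ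
  have hτ0 : τ 0 = l := rfl
  have hτs : ∀ t, τ (t + 1) = σ t := fun t => by simp [hτ]
  have hcyc : IsCycle (k + 1) τ := ⟨Nat.succ_le_succ (Nat.zero_le k), by rw [hτs k, hk, hτ0]⟩
  have hedge' : ∀ t < k + 1, tightR A lam x (τ t) (τ (t + 1)) := by
    intro t ht
    cases t with
    | zero => rw [hτ0, hτs 0, h0]; exact hedge
    | succ s =>
      rw [hτs s, hτs (s + 1)]
      exact hedges s (by omega)
  have hin : ∀ t < k + 1, x (τ t) ≠ 0 := fun t ht => (hedge' t ht).1
  have hw : cycleWeight A (k + 1) τ = lam ^ (k + 1) :=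
    tight_cycle_weight hcyc hin (fun t ht => (hedge' t ht).2.2)
  exact ⟨k + 1, τ, hcyc, hin, hw, 0, Nat.succ_pos k, hτ0, by rw [hτs 0, h0]⟩


lemma pow_lt_pow_anti {a : ℝ≥0} (ha0 : 0 < a) (ha1 : a < 1) {m k : ℕ} (h : m < k) :
    a ^ k < a ^ m := by
  have h1 : a ^ k = a ^ m * a ^ (k - m) := by rw [← pow_add]; congr 1; omega
  have h2 : a ^ (k - m) < 1 := pow_lt_one₀ zero_le ha1 (by omega)
  calc a ^ k = a ^ m * a ^ (k - m) := h1
    _ < a ^ m * 1 := mul_lt_mul_of_pos_left h2 (pow_pos ha0 m)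
    _ = a ^ m := mul_one _

lemma backward {x : Fin n → ℝ≥0} (hE : mulVec A x = fun i => lam * x i)
    (hlam : 0 < lam)
    (hii : ∀ i, x i = 0 → ∃ l, x l = 0 ∧ A l i ≠ 0)
    (hiii : ∀ i, x i ≠ 0 → ∃ (k : ℕ) (σ : ℕ → Fin n), IsCycle k σ ∧
      (∀ t < k, x (σ t) ≠ 0) ∧ cycleWeight A k σ = lam ^ k ∧ ∃ t < k, σ t = i)
    (hiv : ∀ i, x i ≠ 0 → ∀ j j', Crit A lam x i j → Crit A lam x i j' → j = j')
    (hne : ∃ i, x i ≠ 0) :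
    ∃ x' : Fin n → ℝ≥0, x' ≠ 0 ∧ mulVec A x' = (fun i => lam * x' i) ∧
      ∀ y : Fin n → ℝ≥0, mulVec A y = (fun i => lam * x' i) → y = x' := by
  classical
  obtain ⟨i₀, hi₀⟩ := hne
  have hn : 0 < n := i₀.pos
  set S := {i : Fin n // x i ≠ 0} with hS
  -- the unique critical successor map
  have hout : ∀ i : S, ∃ j : S, Crit A lam x i.val j.val := by
    intro i
    obtain ⟨k, σ, hc, hin, hw, t, htk, hti⟩ := hiii i.val i.prop
    have hcrit : Crit A lam x i.val (σ (t + 1)) := ⟨k, σ, hc, hin, hw, t, htk, hti, rfl⟩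
    exact ⟨⟨σ (t + 1), (tightR_of_crit hE hlam hcrit).2.1⟩, hcrit⟩
  choose F hF using hout
  have hFuniq : ∀ (i : S) (j : Fin n), Crit A lam x i.val j → j = (F i).val :=
    fun i j h => hiv i.val i.prop j (F i).val h (hF i)
  have hFsurj : Function.Surjective F := by
    intro j
    obtain ⟨k, σ, hc, hin, hw, t, htk, hti⟩ := hiii j.val j.prop
    have hpred : ∃ s, s < k ∧ σ s = σ (if t = 0 then k - 1 else t - 1) ∧
        σ (s + 1) = j.val := by
      by_cases ht0 : t = 0
      · refine ⟨k - 1, by omega, by rw [if_pos ht0], ?_⟩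
        rw [show k - 1 + 1 = k by omega, hc.2, ← hti, ht0]
      · refine ⟨t - 1, by omega, by rw [if_neg ht0], ?_⟩
        rw [show t - 1 + 1 = t by omega, hti]
    obtain ⟨s, hsk, -, hsj⟩ := hpred
    have hcrit : Crit A lam x (σ s) j.val := ⟨k, σ, hc, hin, hw, s, hsk, rfl, hsj⟩
    have hp : x (σ s) ≠ 0 := (tightR_of_crit hE hlam hcrit).1
    exact ⟨⟨σ s, hp⟩, Subtype.ext (hFuniq ⟨σ s, hp⟩ j.val hcrit).symm⟩
  set e : Equiv.Perm S := Equiv.ofBijective F (Finite.surjective_iff_bijective.1 hFsurj)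
    with he
  have heF : ∀ a : S, e a = F a := fun a => rfl
  have htF : ∀ a : S, tightR A lam x a.val (F a).val :=
    fun a => tightR_of_crit hE hlam (hF a)
  have hscpow : ∀ (m : ℕ) (a : S),
      Relation.ReflTransGen (tightR A lam x) a.val ((e ^ m) a).val := by
    intro m
    induction m with
    | zero => intro a; rw [pow_zero]; exact Relation.ReflTransGen.refl
    | succ m ih =>
      intro a
      have h1 : (e ^ (m + 1)) a = (e ^ m) (e a) := by
        rw [pow_succ]; rfl
      rw [h1]
      exact Relation.ReflTransGen.head (heF a ▸ htF a) (ih (e a))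
  have hscpath : ∀ a b : S, e.SameCycle a b →
      Relation.ReflTransGen (tightR A lam x) a.val b.val := by
    intro a b hab
    obtain ⟨m, -, -, hm⟩ := Equiv.Perm.SameCycle.exists_pow_eq e hab
    rw [← hm]
    exact hscpow m a
  have hscF : ∀ a : S, e.SameCycle a (F a) := fun a => ⟨1, by rw [zpow_one, heF]⟩
  have htuniq : ∀ a b : S, tightR A lam x a.val b.val → e.SameCycle a b → b = F a := by
    intro a b ht hsc
    exact Subtype.ext (hFuniq a b.val (crit_of_tight_loop ht (hscpath b a hsc.symm)))
  -- the inter-component relation and the rank function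
  set P : S → S → Prop := fun a b => ∃ a' b' : S, e.SameCycle a a' ∧ e.SameCycle b b' ∧
    tightR A lam x a'.val b'.val ∧ ¬ e.SameCycle a' b' with hP
  have hPof : ∀ a b : S, tightR A lam x a.val b.val → ¬ e.SameCycle a b → P a b :=
    fun a b h1 h2 => ⟨a, b, ⟨0, rfl⟩, ⟨0, rfl⟩, h1, h2⟩
  have hPrtg : ∀ a b : S, P a b → Relation.ReflTransGen (tightR A lam x) a.val b.val := by
    rintro a b ⟨a', b', h1, h2, h3, -⟩
    exact (hscpath a a' h1).trans ((Relation.ReflTransGen.single h3).trans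
      (hscpath b' b h2.symm))
  have hRrtg : ∀ a b : S, Relation.ReflTransGen P a b →
      Relation.ReflTransGen (tightR A lam x) a.val b.val := by
    intro a b h
    induction h with
    | refl => exact Relation.ReflTransGen.refl
    | tail h1 h2 ih => exact ih.trans (hPrtg _ _ h2)
  have hPirr : ∀ a : S, ¬ Relation.TransGen P a a := by
    intro a ha
    obtain ⟨b, hab, hba⟩ := Relation.TransGen.tail'_iff.1 ha
    obtain ⟨b', a', hsb, hsa, htight, hnsc⟩ := hba
    have hp1 : Relation.ReflTransGen (tightR A lam x) a'.val a.val := hscpath a' a hsa.symm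
    have hp2 : Relation.ReflTransGen (tightR A lam x) a.val b.val := hRrtg a b hab
    have hp3 : Relation.ReflTransGen (tightR A lam x) b.val b'.val := hscpath b b' hsb
    have hcrit := crit_of_tight_loop htight ((hp1.trans hp2).trans hp3)
    have hval := hFuniq b' a'.val hcrit
    exact hnsc ⟨1, by rw [zpow_one, heF]; exact (Subtype.ext hval).symm⟩
  have hPrepl : ∀ z a b : S, e.SameCycle a b → P z a → P z b := by
    rintro z a b hab ⟨a', b', h1, h2, h3, h4⟩
    exact ⟨a', b', h1, hab.symm.trans h2, h3, h4⟩
  have hTrepl : ∀ z a b : S, e.SameCycle a b →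
      Relation.TransGen P z a → Relation.TransGen P z b := by
    intro z a b hab h
    obtain ⟨w, hzw, hwa⟩ := Relation.TransGen.tail'_iff.1 h
    exact Relation.TransGen.tail' hzw (hPrepl w a b hab hwa)
  set ρ : S → ℕ := fun a =>
    (Finset.univ.filter (fun c => Relation.TransGen P c a)).card with hρ
  have hρsc : ∀ a b : S, e.SameCycle a b → ρ a = ρ b := by
    have key : ∀ a b : S, e.SameCycle a b → ρ a ≤ ρ b := by
      intro a b hab
      apply Finset.card_le_card
      intro c hc
      simp only [Finset.mem_filter, Finset.mem_univ, true_and] at hc ⊢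
      exact hTrepl c a b hab hc
    exact fun a b hab => le_antisymm (key a b hab) (key b a hab.symm)
  have hρlt : ∀ a b : S, P a b → ρ a < ρ b := by
    intro a b hab
    apply Finset.card_lt_card
    rw [Finset.ssubset_iff_of_subset]
    · refine ⟨a, ?_, ?_⟩
      · simp only [Finset.mem_filter, Finset.mem_univ, true_and]
        exact Relation.TransGen.single hab
      · simp only [Finset.mem_filter, Finset.mem_univ, true_and]
        exact hPirr a
    · intro c hc
      simp only [Finset.mem_filter, Finset.mem_univ, true_and] at hc ⊢
      exact Relation.TransGen.tail hc hab
  have hρn : ∀ a : S, ρ a ≤ n := by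
    intro a
    calc ρ a ≤ Finset.univ.card := Finset.card_filter_le _ _
      _ = Fintype.card S := Finset.card_univ
      _ ≤ Fintype.card (Fin n) := Fintype.card_subtype_le _
      _ = n := Fintype.card_fin n
  -- the scaling base
  set slack : Finset (Fin n × Fin n) := Finset.univ.filter
    (fun p => x p.1 ≠ 0 ∧ x p.2 ≠ 0 ∧ A p.1 p.2 * x p.2 < lam * x p.1) with hslackdef
  set δ : ℝ≥0 := slack.sup (fun p => (A p.1 p.2 * x p.2) / (lam * x p.1)) with hδ
  have hδ1 : δ < 1 := by
    rw [hδ, Finset.sup_lt_iff (by norm_num : (⊥ : ℝ≥0) < 1)]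
    intro p hp
    simp only [hslackdef, Finset.mem_filter, Finset.mem_univ, true_and] at hp
    have hpos : 0 < lam * x p.1 := mul_pos hlam (pos_iff_ne_zero.2 hp.1)
    exact (div_lt_one hpos).2 hp.2.2
  have h2pos : (0 : ℝ≥0) < 2 := by norm_num
  set r0 : ℝ≥0 := (δ + 1) / 2 with hr0
  have hδr0 : δ < r0 := by
    rw [hr0, lt_div_iff₀ h2pos, mul_two]
    exact add_lt_add_right hδ1 δ
  have hr01 : r0 < 1 := by
    rw [hr0, div_lt_one h2pos]
    calc δ + 1 < 1 + 1 := add_lt_add_left hδ1 1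
      _ = 2 := one_add_one_eq_two
  have hr0pos : 0 < r0 := by
    rw [hr0]
    exact div_pos (lt_of_lt_of_le one_pos (le_add_self)) h2pos
  set r : ℝ≥0 := r0 ^ ((n : ℝ)⁻¹) with hr
  have hrpos : 0 < r := NNReal.rpow_pos hr0pos
  have hr1 : r < 1 := NNReal.rpow_lt_one hr01 (by positivity)
  have hrn : r ^ n = r0 := by
    rw [hr, ← NNReal.rpow_natCast (r0 ^ ((n : ℝ)⁻¹)) n, ← NNReal.rpow_mul,
      inv_mul_cancel₀ (by exact_mod_cast hn.ne' : (n : ℝ) ≠ 0), NNReal.rpow_one]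
  -- the perturbed vector
  set ρ' : Fin n → ℕ := fun i => if h : x i ≠ 0 then ρ ⟨i, h⟩ else 0 with hρ'
  have hρ'a : ∀ a : S, ρ' a.val = ρ a := by
    intro a
    simp only [hρ']
    rw [dif_pos a.prop]
  have hρ'n : ∀ i, ρ' i ≤ n := by
    intro i
    simp only [hρ']
    by_cases h : x i ≠ 0
    · rw [dif_pos h]; exact hρn _
    · rw [dif_neg h]; exact Nat.zero_le n
  set x' : Fin n → ℝ≥0 := fun i => x i * r ^ ρ' i with hx'
  have hx'0 : ∀ i, x' i = 0 ↔ x i = 0 := by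
    intro i
    rw [hx']
    simp [pow_eq_zero_iff, hrpos.ne']
  have hx'ne : ∀ a : S, x' a.val ≠ 0 := fun a h => a.prop ((hx'0 a.val).1 h)
  -- slack bound
  have hslack : ∀ l j : Fin n, x l ≠ 0 → x j ≠ 0 → A l j * x j < lam * x l →
      A l j * x j < lam * x l * r ^ n := by
    intro l j hl hj hlt
    rw [hrn]
    have hpos : 0 < lam * x l := mul_pos hlam (pos_iff_ne_zero.2 hl)
    have hmem : (l, j) ∈ slack := by
      simp only [hslackdef, Finset.mem_filter, Finset.mem_univ, true_and]
      exact ⟨hl, hj, hlt⟩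
    have h1 : (A l j * x j) / (lam * x l) ≤ δ :=
      Finset.le_sup (f := fun p => (A p.1 p.2 * x p.2) / (lam * x p.1)) hmem
    calc A l j * x j = (A l j * x j) / (lam * x l) * (lam * x l) :=
          (div_mul_cancel₀ _ hpos.ne').symm
      _ ≤ δ * (lam * x l) := mul_le_mul_left h1 _
      _ < r0 * (lam * x l) := mul_lt_mul_of_pos_right hδr0 hpos
      _ = lam * x l * r0 := mul_comm _ _
  -- (a) the F-edges remain tight
  have hedgeA : ∀ a : S, A a.val (F a).val * x' (F a).val = lam * x' a.val := by
    intro a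
    have ht := htF a
    simp only [hx']
    rw [hρ'a (F a), hρ'a a, ← hρsc a (F a) (hscF a), ← mul_assoc, ht.2.2, mul_assoc]
  -- (b) all other edges inside the support become strictly slack
  have hedgeB : ∀ (a : S) (j : S), j ≠ F a →
      A a.val j.val * x' j.val < lam * x' a.val := by
    intro a j hj
    have hpos : 0 < lam * x a.val := mul_pos hlam (pos_iff_ne_zero.2 a.prop)
    have hterm : A a.val j.val * x j.val ≤ lam * x a.val := by
      calc A a.val j.val * x j.val ≤ mulVec A x a.val := term_le_mulVec x _ _
        _ = lam * x a.val := by rw [hE]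
    rcases lt_or_eq_of_le hterm with hlt | htight
    · -- x-slack edge
      calc A a.val j.val * x' j.val = A a.val j.val * x j.val * r ^ ρ' j.val := by
            rw [hx', mul_assoc]
        _ ≤ A a.val j.val * x j.val * 1 :=
            mul_le_mul_right (pow_le_one₀ zero_le hr1.le) _
        _ = A a.val j.val * x j.val := mul_one _
        _ < lam * x a.val * r ^ n := hslack a.val j.val a.prop j.prop hlt
        _ ≤ lam * x a.val * r ^ ρ' a.val :=
            mul_le_mul_right (pow_le_pow_of_le_one zero_le hr1.le (hρ'n a.val)) _
        _ = lam * x' a.val := by rw [hx', mul_assoc]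
    · -- x-tight edge
      have htR : tightR A lam x a.val j.val := ⟨a.prop, j.prop, htight⟩
      have hnsc : ¬ e.SameCycle a j := fun hsc => hj (htuniq a j htR hsc)
      have hρab : ρ a < ρ j := hρlt a j (hPof a j htR hnsc)
      calc A a.val j.val * x' j.val = lam * x a.val * r ^ ρ' j.val := by
            rw [hx', ← mul_assoc, htight]
        _ < lam * x a.val * r ^ ρ' a.val := by
            rw [hρ'a a, hρ'a j]
            exact mul_lt_mul_of_pos_left (pow_lt_pow_anti hrpos hr1 hρab) hpos
        _ = lam * x' a.val := by rw [hx', mul_assoc]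
  -- zero rows
  have hzrow : ∀ l, x l = 0 → ∀ j, A l j * x' j = 0 := by
    intro l hl j
    have h1 : A l j * x j ≤ lam * x l := by
      calc A l j * x j ≤ mulVec A x l := term_le_mulVec x _ _
        _ = lam * x l := by rw [hE]
    rw [hl, mul_zero, nonpos_iff_eq_zero] at h1
    rw [hx', ← mul_assoc, h1, zero_mul]
  -- x' is an eigenvector
  have hE' : mulVec A x' = fun i => lam * x' i := by
    funext l
    by_cases hl : x l = 0
    · have hx'l : x' l = 0 := (hx'0 l).2 hl
      rw [hx'l, mul_zero]
      refine le_antisymm (Finset.sup_le fun j _ => le_of_eq (hzrow l hl j)) zero_le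
    · set a : S := ⟨l, hl⟩ with ha
      refine le_antisymm (Finset.sup_le fun j _ => ?_) ?_
      · by_cases hj : x j = 0
        · rw [(hx'0 j).2 hj, mul_zero]
          exact zero_le
        · by_cases hjF : (⟨j, hj⟩ : S) = F a
          · have := hedgeA a
            rw [← hjF] at this
            exact le_of_eq this
          · exact le_of_lt (hedgeB a ⟨j, hj⟩ hjF)
      · calc lam * x' l = A a.val (F a).val * x' (F a).val := (hedgeA a).symm
          _ ≤ mulVec A x' l := term_le_mulVec x' l (F a).val
  -- uniqueness
  have huniq : ∀ y : Fin n → ℝ≥0, mulVec A y = (fun i => lam * x' i) → y = x' := by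
    intro y hy
    have hy0 : ∀ j, x j = 0 → y j = 0 := by
      intro j hj
      obtain ⟨l, hl, hAl⟩ := hii j hj
      have h1 : A l j * y j ≤ lam * x' l := by
        calc A l j * y j ≤ mulVec A y l := term_le_mulVec y _ _
          _ = lam * x' l := by rw [hy]
      rw [(hx'0 l).2 hl, mul_zero, nonpos_iff_eq_zero] at h1
      exact (mul_eq_zero.1 h1).resolve_left hAl
    have hyle : ∀ j : S, y j.val ≤ x' j.val := by
      intro j
      obtain ⟨p, hp⟩ := hFsurj j
      have hApos : A p.val j.val ≠ 0 := by
        intro h0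
        have := (htF p).2.2
        rw [hp] at this
        rw [h0, zero_mul] at this
        exact mul_ne_zero hlam.ne' p.prop this.symm
      have h1 : A p.val j.val * y j.val ≤ lam * x' p.val := by
        calc A p.val j.val * y j.val ≤ mulVec A y p.val := term_le_mulVec y _ _
          _ = lam * x' p.val := by rw [hy]
      have h2 : lam * x' p.val = A p.val j.val * x' j.val := by
        rw [← (hp ▸ hedgeA p : A p.val j.val * x' j.val = lam * x' p.val)]
      have h1' : A p.val j.val * y j.val ≤ A p.val j.val * x' j.val := by
        rw [← h2]; exact h1
      exact le_of_mul_le_mul_left h1' (pos_iff_ne_zero.2 hApos)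
    have hyFeq : ∀ a : S, y (F a).val = x' (F a).val := by
      intro a
      have hml : mulVec A y a.val = lam * x' a.val := by rw [hy]
      have hne0 : mulVec A y a.val ≠ 0 := by
        rw [hml]
        exact mul_ne_zero hlam.ne' (hx'ne a)
      obtain ⟨j0, hj0⟩ := exists_attain y a.val
      have hterm0 : A a.val j0 * y j0 = lam * x' a.val := by rw [← hj0, hml]
      have hyj0 : y j0 ≠ 0 := by
        intro h0
        rw [h0, mul_zero] at hterm0
        exact mul_ne_zero hlam.ne' (hx'ne a) hterm0.symm
      have hxj0 : x j0 ≠ 0 := fun h0 => hyj0 (hy0 j0 h0)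
      have hj0F : (⟨j0, hxj0⟩ : S) = F a := by
        by_contra hne'
        have hb := hedgeB a ⟨j0, hxj0⟩ hne'
        have : A a.val j0 * y j0 ≤ A a.val j0 * x' j0 :=
          mul_le_mul_right (hyle ⟨j0, hxj0⟩) _
        rw [hterm0] at this
        exact absurd (lt_of_le_of_lt this hb) (lt_irrefl _)
      have hApos : A a.val j0 ≠ 0 := by
        intro h0
        rw [h0, zero_mul] at hterm0
        exact mul_ne_zero hlam.ne' (hx'ne a) hterm0.symm
      have heq : A a.val j0 * x' j0 = lam * x' a.val := by
        have := hedgeA a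
        rw [← hj0F] at this
        exact this
      have : A a.val j0 * y j0 = A a.val j0 * x' j0 := by rw [hterm0, heq]
      have hyx : y j0 = x' j0 := by
        have h' := mul_left_cancel₀ hApos this
        exact h'
      rw [← hj0F]
      exact hyx
    funext j
    by_cases hj : x j = 0
    · rw [hy0 j hj, (hx'0 j).2 hj]
    · obtain ⟨p, hp⟩ := hFsurj ⟨j, hj⟩
      have := hyFeq p
      rw [hp] at this
      exact this
  refine ⟨x', ?_, hE', huniq⟩
  intro h0
  exact hx'ne ⟨i₀, hi₀⟩ (by rw [h0]; rfl)

end Backward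

end Aux

/-- existence of nonzero simple image eigenvectors in V(A,λ). -/
theorem stmt9 {n : ℕ} (A : Matrix (Fin n) (Fin n) ℝ≥0) (lam : ℝ≥0) (hlam : 0 < lam) :
    (∃ x : Fin n → ℝ≥0, x ≠ 0 ∧ SimpleImageEig A lam x) ↔
      ∃ N' : Set (Fin n), N'.Nonempty ∧
        (∃ x : Fin n → ℝ≥0, mulVec A x = (fun i => lam * x i) ∧ supp x = N') ∧
        (∀ i ∉ N', ∃ l ∉ N', A l i ≠ 0) ∧
        (∀ i ∈ N', ∃ (k : ℕ) (σ : ℕ → Fin n), IsCycle k σ ∧ LiesIn k σ N' ∧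
          cycleWeight A k σ = lam ^ k ∧ ∃ t < k, σ t = i) ∧
        (∀ i ∈ N', ∃! j : Fin n, ∃ (k : ℕ) (σ : ℕ → Fin n), IsCycle k σ ∧
          LiesIn k σ N' ∧ cycleWeight A k σ = lam ^ k ∧
          ∃ t < k, σ t = i ∧ σ (t + 1) = j) := by
  classical
  constructor
  · rintro ⟨x, hx0, hxE, huniq⟩
    have hE : mulVec A x = fun i => lam * x i := hxE
    obtain ⟨i₀, hi₀⟩ : ∃ i, x i ≠ 0 := Function.ne_iff.1 hx0
    set S := {i : Fin n // x i ≠ 0} with hS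
    obtain ⟨p, hp⟩ := fwd_perm hE hlam huniq
    -- a canonical critical cycle through any support element
    have hcycle : ∀ z : S, ∃ (k : ℕ) (σ : ℕ → Fin n), IsCycle k σ ∧
        LiesIn k σ (supp x) ∧ cycleWeight A k σ = lam ^ k ∧
        σ 0 = z.val ∧ σ 1 = (p z).val := by
      intro z
      set k := orderOf p with hk
      have hkpos : 0 < k := orderOf_pos p
      set σ : ℕ → Fin n := fun m => ((p ^ m) z).val with hσ
      have hσ0 : σ 0 = z.val := by simp [hσ]
      have hσk : σ k = σ 0 := by
        simp only [hσ, hk, pow_orderOf_eq_one]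
        rfl
      have hstep : ∀ m, σ (m + 1) = (p ((p ^ m) z)).val := by
        intro m
        simp only [hσ, pow_succ']
        rfl
      have hedges : ∀ m, A (σ m) (σ (m + 1)) * x (σ (m + 1)) = lam * x (σ m) := by
        intro m
        rw [hstep m]
        exact (hp ((p ^ m) z)).1
      have hin : ∀ t < k, x (σ t) ≠ 0 := fun t _ => ((p ^ t) z).prop
      have hw : cycleWeight A k σ = lam ^ k :=
        tight_cycle_weight ⟨hkpos, hσk⟩ hin (fun t _ => hedges t)
      have hσ1 : σ 1 = (p z).val := by
        rw [hstep 0]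
        simp
      exact ⟨k, σ, ⟨hkpos, hσk⟩, fun t ht => hin t ht, hw, hσ0, hσ1⟩
    refine ⟨supp x, ⟨i₀, hi₀⟩, ⟨x, hxE, rfl⟩, ?_, ?_, ?_⟩
    · -- condition (ii)
      intro i hi
      by_contra hcon
      push_neg at hcon
      have hxi : x i = 0 := not_not.1 hi
      exact fwd_ii hE hlam huniq hxi
        (fun l hl0 => hcon l (fun hmem => hmem hl0))
    · -- condition (iii)
      intro i hi
      have hi' : x i ≠ 0 := hi
      obtain ⟨k, σ, hc, hlies, hw, hσ0, -⟩ := hcycle ⟨i, hi'⟩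
      exact ⟨k, σ, hc, hlies, hw, 0, hc.1, hσ0⟩
    · -- condition (iv)
      intro i hi
      have hi' : x i ≠ 0 := hi
      set z : S := ⟨i, hi'⟩ with hz
      obtain ⟨k, σ, hc, hlies, hw, hσ0, hσ1⟩ := hcycle z
      refine ⟨(p z).val, ⟨k, σ, hc, hlies, hw, 0, hc.1, hσ0, hσ1⟩, ?_⟩
      rintro j' ⟨k', σ', hc', hlies', hw', t', ht', hti', htj'⟩
      have hin' : ∀ t < k', x (σ' t) ≠ 0 := fun t ht => hlies' t ht
      have htight := cycle_tight hE hlam hc' hin' hw' t' ht'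
      rw [hti', htj'] at htight
      exact (hp z).2 j' htight
  · rintro ⟨N', hNne, ⟨x, hxE, hsupp⟩, hii, hiii, hiv⟩
    subst hsupp
    have hii' : ∀ i, x i = 0 → ∃ l, x l = 0 ∧ A l i ≠ 0 := by
      intro i h0
      obtain ⟨l, hl, hA⟩ := hii i (fun hmem => hmem h0)
      exact ⟨l, not_not.1 hl, hA⟩
    have hiii' : ∀ i, x i ≠ 0 → ∃ (k : ℕ) (σ : ℕ → Fin n), IsCycle k σ ∧
        (∀ t < k, x (σ t) ≠ 0) ∧ cycleWeight A k σ = lam ^ k ∧ ∃ t < k, σ t = i := by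
      intro i hi
      obtain ⟨k, σ, hc, hlies, hw, ht⟩ := hiii i hi
      exact ⟨k, σ, hc, fun t h => hlies t h, hw, ht⟩
    have hiv' : ∀ i, x i ≠ 0 → ∀ j j', Crit A lam x i j → Crit A lam x i j' → j = j' := by
      intro i hi j j' h1 h2
      obtain ⟨k1, σ1, hc1, hin1, hw1, hedge1⟩ := h1
      obtain ⟨k2, σ2, hc2, hin2, hw2, hedge2⟩ := h2
      exact (hiv i hi).unique ⟨k1, σ1, hc1, fun t h => hin1 t h, hw1, hedge1⟩
        ⟨k2, σ2, hc2, fun t h => hin2 t h, hw2, hedge2⟩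
    obtain ⟨i₀, hi₀⟩ := hNne
    obtain ⟨x', hx'0, hE', huniq'⟩ := backward hxE hlam hii' hiii' hiv' ⟨i₀, hi₀⟩
    exact ⟨x', hx'0, hE', huniq'⟩


end MaxAlg

end
end
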